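/- Let p be a prime, S ⊆ ℤ_p finite nonempty, m a positive integer, Ψ(χ) = (m/|S|^2)·Σ_{x,x'∈S} ||χx - χx'||_p^2, B_t = {χ ∈ ℤ_p : Ψ(χ) ≤ t}, and Q_{t,δ} = {x ∈ ℤ_p : Σ_{χ∈B_t} ||χx||_p^2 < δ|B_t|}. Then for every positive integer t, |Q_{t, 10t/m}| ≥ (9/10)|S|. -/

import Mathlib

open scoped Classical

/-- For `x ∈ ℤ_p`, the distance of `y/p` to the nearest integer, where `y` represents `x`. -/
noncomputable def pDist (p : ℕ) (x : ZMod p) : ℝ :=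
  |(x.val : ℝ) / p - round ((x.val : ℝ) / p)|

/-- `Ψ(χ) = (m/|S|²) · Σ_{x,x'∈S} ‖χx - χx'‖_p²`. -/
noncomputable def Psi (p : ℕ) (S : Finset (ZMod p)) (m : ℕ) (χ : ZMod p) : ℝ :=
  (m : ℝ) / (S.card : ℝ) ^ 2 * ∑ x ∈ S, ∑ x' ∈ S, pDist p (χ * x - χ * x') ^ 2

/-- `B_t = {χ ∈ ℤ_p : Ψ(χ) ≤ t}`. -/
noncomputable def Bt (p : ℕ) [NeZero p] (S : Finset (ZMod p)) (m : ℕ) (t : ℝ) :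
    Finset (ZMod p) :=
  Finset.univ.filter fun χ => Psi p S m χ ≤ t

/-- `Q_{t,δ} = {x ∈ ℤ_p : Σ_{χ∈B_t} ‖χx‖_p² < δ|B_t|}`. -/
noncomputable def Qt (p : ℕ) [NeZero p] (S : Finset (ZMod p)) (m : ℕ) (t δ : ℝ) :
    Finset (ZMod p) :=
  Finset.univ.filter fun x => ∑ χ ∈ Bt p S m t, pDist p (χ * x) ^ 2 < δ * (Bt p S m t).card

theorem stmt10 (p : ℕ) [Fact p.Prime] (S : Finset (ZMod p)) (hS : S.Nonempty)
    (m : ℕ) (hm : 0 < m) (t : ℕ) (ht : 0 < t) :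
    (9 / 10 : ℝ) * S.card ≤ ((Qt p S m t (10 * t / m)).card : ℝ) := by
  classical
  set δ : ℝ := 10 * t / m with hδ
  set B : Finset (ZMod p) := Bt p S m t with hB
  set Q : Finset (ZMod p) := Qt p S m t δ with hQ
  have hScard : 0 < (S.card : ℝ) := by exact_mod_cast Finset.card_pos.2 hS
  have hmR : 0 < (m : ℝ) := by exact_mod_cast hm
  have htR : 0 < (t : ℝ) := by exact_mod_cast ht
  have hδpos : 0 < δ := by rw [hδ]; positivity
  have hB0 : (0 : ZMod p) ∈ B := by
    rw [hB, Bt, Finset.mem_filter]; simp only [Finset.mem_univ, true_and, Psi]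
    have h0 : ∀ x x' : ZMod p, pDist p ((0:ZMod p)*x - 0*x') ^ 2 = 0 := by
      intro x x'; simp [pDist]
    simp only [h0, Finset.sum_const_zero, mul_zero]
    positivity
  have hBcard : 0 < (B.card : ℝ) := by
    exact_mod_cast Finset.card_pos.2 ⟨0, hB0⟩
  set g : ZMod p → ℝ := fun x => ∑ χ ∈ B, pDist p (χ * x) ^ 2 with hg
  have hgnn : ∀ x, 0 ≤ g x := fun x => Finset.sum_nonneg (fun _ _ => sq_nonneg _)
  -- Step 1
  have hsum : ∑ y ∈ S, ∑ y' ∈ S, g (y - y') ≤ (t / m) * S.card ^ 2 * B.card := by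
    have hrw : ∑ y ∈ S, ∑ y' ∈ S, g (y - y')
        = ∑ χ ∈ B, ∑ y ∈ S, ∑ y' ∈ S, pDist p (χ * y - χ * y') ^ 2 := by
      calc ∑ y ∈ S, ∑ y' ∈ S, g (y - y')
          = ∑ y ∈ S, ∑ χ ∈ B, ∑ y' ∈ S, pDist p (χ * y - χ * y') ^ 2 := by
            refine Finset.sum_congr rfl fun y _ => ?_
            simp only [hg, mul_sub]
            exact Finset.sum_comm
        _ = ∑ χ ∈ B, ∑ y ∈ S, ∑ y' ∈ S, pDist p (χ * y - χ * y') ^ 2 :=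
            Finset.sum_comm
    rw [hrw]
    have hbound : ∀ χ ∈ B,
        ∑ y ∈ S, ∑ y' ∈ S, pDist p (χ * y - χ * y') ^ 2 ≤ (t / m) * S.card ^ 2 := by
      intro χ hχ
      have hχ' : Psi p S m χ ≤ t := by
        simpa [hB, Bt] using hχ
      rw [Psi] at hχ'
      rw [div_mul_comm] at hχ'
      have h2 : (S.card : ℝ)^2 ≠ 0 := by positivity
      rw [div_mul_eq_mul_div] at hχ'
      have hc2 : (0:ℝ) < (S.card : ℝ)^2 := by positivity
      rw [div_le_iff₀ hc2] at hχ'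
      rw [div_mul_eq_mul_div, le_div_iff₀ hmR]
      linarith
    calc ∑ χ ∈ B, ∑ y ∈ S, ∑ y' ∈ S, pDist p (χ * y - χ * y') ^ 2
        ≤ ∑ _χ ∈ B, (t / m : ℝ) * S.card ^ 2 := Finset.sum_le_sum hbound
      _ = (t / m : ℝ) * S.card ^ 2 * B.card := by
          rw [Finset.sum_const, nsmul_eq_mul]; ring
  -- pairs
  set F : Finset (ZMod p × ZMod p) := (S ×ˢ S).filter (fun q => q.1 - q.2 ∈ Q) with hF
  set Fc : Finset (ZMod p × ZMod p) := (S ×ˢ S).filter (fun q => q.1 - q.2 ∉ Q) with hFc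
  have hcards : F.card + Fc.card = S.card ^ 2 := by
    rw [hF, hFc, Finset.card_filter_add_card_filter_not, Finset.card_product, sq]
  -- Markov lower bound on Fc
  have hFcbd : (Fc.card : ℝ) * (δ * B.card) ≤ (t / m) * S.card ^ 2 * B.card := by
    have h1 : (Fc.card : ℝ) * (δ * B.card) ≤ ∑ q ∈ Fc, g (q.1 - q.2) := by
      have key : ∀ q ∈ Fc, δ * B.card ≤ g (q.1 - q.2) := by
        intro q hq
        rw [hFc, Finset.mem_filter] at hq
        have hnq := hq.2
        rw [hQ, Qt, Finset.mem_filter] at hnq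
        push_neg at hnq
        exact hnq (Finset.mem_univ _)
      have := Finset.card_nsmul_le_sum Fc (fun q => g (q.1 - q.2)) (δ * B.card) key
      simpa [nsmul_eq_mul] using this
    have h2 : ∑ q ∈ Fc, g (q.1 - q.2) ≤ ∑ q ∈ S ×ˢ S, g (q.1 - q.2) := by
      apply Finset.sum_le_sum_of_subset_of_nonneg (Finset.filter_subset _ _)
      intro q _ _; exact hgnn _
    have h3 : ∑ q ∈ S ×ˢ S, g (q.1 - q.2) = ∑ y ∈ S, ∑ y' ∈ S, g (y - y') := by
      rw [Finset.sum_product]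
    linarith
  have hFcsmall : (Fc.card : ℝ) ≤ (S.card : ℝ) ^ 2 / 10 := by
    have hδB : δ * B.card = 10 * ((t/m) * B.card) := by rw [hδ]; ring
    have h10 : (0:ℝ) < (t/m) * B.card := by positivity
    nlinarith [hFcbd]
  -- F ≤ Q.card * S.card
  have hFQ : (F.card : ℝ) ≤ (Q.card : ℝ) * S.card := by
    have : F.card ≤ (Q ×ˢ S).card := by
      apply Finset.card_le_card_of_injOn (fun q => (q.1 - q.2, q.2))
      · intro q hq
        simp only [hF, Finset.mem_coe, Finset.mem_filter, Finset.mem_product] at hq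
        exact Finset.mem_product.2 ⟨hq.2, hq.1.2⟩
      · intro a _ b _ hab
        have hab' : (a.1 - a.2, a.2) = (b.1 - b.2, b.2) := hab
        rw [Prod.mk.injEq] at hab'
        obtain ⟨h1, h2⟩ := hab'
        have h3 : a.1 = b.1 := by
          rw [h2] at h1
          exact sub_left_inj.mp h1
        exact Prod.ext h3 h2
    calc (F.card : ℝ) ≤ ((Q ×ˢ S).card : ℝ) := by exact_mod_cast this
      _ = (Q.card : ℝ) * S.card := by rw [Finset.card_product]; push_cast; ring
  have hFbig : (9/10 : ℝ) * S.card ^ 2 ≤ (F.card : ℝ) := by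
    have : (F.card : ℝ) + (Fc.card : ℝ) = (S.card : ℝ)^2 := by exact_mod_cast hcards
    linarith
  nlinarith [hFbig, hFQ, hScard]
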